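/- Let $N_1 > N_2 > 0$ and $a_2 > a_1 > 1$ be reals, and define for $\tau \ge 0$ $$g(\tau) = N_1 \log\frac{1+\tau}{\tfrac{1}{a_1}+\tau} + N_2 \log\frac{a_2\left(\tfrac{1}{a_2}+\tau\right)}{1+\tau}.$$ If $\dfrac{N_2}{N_1} > \dfrac{a_2(a_1 - 1)}{a_1(a_2 - 1)}$, then $g$ is strictly increasing on $[0,\infty)$, $g(\tau) < N_2 \log a_2$ for every $\tau \ge 0$, and $g(\tau) \to N_2 \log a_2$ as $\tau \to \infty$; consequently $\sup_{\tau \ge 0} g(\tau) = N_2 \log a_2$. -/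

import Mathlib

/-- For the two-level converse bound
`g(τ) = N1 log ((1+τ)/(1/a1+τ)) + N2 log (a2 (1/a2+τ)/(1+τ))`, if
`N2/N1 > a2(a1-1)/(a1(a2-1))` then `g` is strictly increasing on `[0, ∞)`,
bounded above by `N2 log a2`, tends to `N2 log a2` at infinity, and
`sup_{τ ≥ 0} g(τ) = N2 log a2`. -/
theorem converse_sup_at_infinity
    (N1 N2 a1 a2 : ℝ) (h12 : N2 < N1) (h2 : 0 < N2)
    (ha1 : 1 < a1) (ha12 : a1 < a2)
    (hcond : a2 * (a1 - 1) / (a1 * (a2 - 1)) < N2 / N1)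
    (g : ℝ → ℝ)
    (hg : ∀ τ : ℝ, g τ = N1 * Real.log ((1 + τ) / (1 / a1 + τ)) +
      N2 * Real.log (a2 * (1 / a2 + τ) / (1 + τ))) :
    StrictMonoOn g (Set.Ici (0 : ℝ)) ∧
    (∀ τ : ℝ, 0 ≤ τ → g τ < N2 * Real.log a2) ∧
    Filter.Tendsto g Filter.atTop (nhds (N2 * Real.log a2)) ∧
    IsLUB (g '' Set.Ici (0 : ℝ)) (N2 * Real.log a2) := by
  have ha1' : (0:ℝ) < a1 := by linarith
  have ha2' : (0:ℝ) < a2 := by linarith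
  have h1 : (0:ℝ) < N1 := lt_trans h2 h12
  have hb1 : (0:ℝ) < 1 / a1 := by positivity
  have hb2 : (0:ℝ) < 1 / a2 := by positivity
  have key : a2 * (a1 - 1) * N1 < N2 * (a1 * (a2 - 1)) := by
    rw [div_lt_div_iff₀ (by nlinarith) h1] at hcond
    exact hcond
  -- Explicit smooth form G of g
  set G : ℝ → ℝ := fun τ => N1 * Real.log (1 + τ) - N1 * Real.log (1 / a1 + τ) +
      (N2 * Real.log a2 + (N2 * Real.log (1 / a2 + τ) - N2 * Real.log (1 + τ))) with hGdef
  have hgeq : ∀ τ : ℝ, 0 ≤ τ → g τ = G τ := by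
    intro τ hτ
    have hu : (0:ℝ) < 1 + τ := by linarith
    have hv : (0:ℝ) < 1 / a1 + τ := by linarith
    have hw : (0:ℝ) < 1 / a2 + τ := by linarith
    rw [hg, hGdef]
    simp only
    rw [Real.log_div hu.ne' hv.ne', Real.log_div (by positivity) hu.ne',
      Real.log_mul ha2'.ne' hw.ne']
    ring
  -- derivative of G
  have hderiv : ∀ x : ℝ, 0 ≤ x → HasDerivAt G
      (N1 * (1 / (1 + x)) - N1 * (1 / (1 / a1 + x)) +
        (0 + (N2 * (1 / (1 / a2 + x)) - N2 * (1 / (1 + x))))) x := by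
    intro x hx
    have hu : (0:ℝ) < 1 + x := by linarith
    have hv : (0:ℝ) < 1 / a1 + x := by linarith
    have hw : (0:ℝ) < 1 / a2 + x := by linarith
    have d1 : HasDerivAt (fun τ : ℝ => Real.log (1 + τ)) (1 / (1 + x)) x := by
      simpa using (((hasDerivAt_id x).const_add 1).log hu.ne')
    have d2 : HasDerivAt (fun τ : ℝ => Real.log (1 / a1 + τ)) (1 / (1 / a1 + x)) x := by
      simpa using (((hasDerivAt_id x).const_add (1 / a1)).log hv.ne')
    have d3 : HasDerivAt (fun τ : ℝ => Real.log (1 / a2 + τ)) (1 / (1 / a2 + x)) x := by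
      simpa using (((hasDerivAt_id x).const_add (1 / a2)).log hw.ne')
    exact ((d1.const_mul N1).sub (d2.const_mul N1)).add
      ((hasDerivAt_const x (N2 * Real.log a2)).add ((d3.const_mul N2).sub (d1.const_mul N2)))
  -- positivity of the derivative
  have hpos : ∀ x : ℝ, 0 ≤ x →
      0 < N1 * (1 / (1 + x)) - N1 * (1 / (1 / a1 + x)) +
        (0 + (N2 * (1 / (1 / a2 + x)) - N2 * (1 / (1 + x)))) := by
    intro x hx
    have hu : (0:ℝ) < 1 + x := by linarith
    have hv : (0:ℝ) < 1 / a1 + x := by linarith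
    have hw : (0:ℝ) < 1 / a2 + x := by linarith
    have hconst : N1 * (a1 - 1) < N2 * (a2 - 1) := by
      nlinarith [mul_pos (mul_pos h1 (sub_pos.2 ha1)) (sub_pos.2 ha12), ha1']
    have hnum : 0 < N2 * (a2 - 1) * (1 + a1 * x) - N1 * (a1 - 1) * (1 + a2 * x) := by
      nlinarith [hconst, mul_nonneg hx (sub_nonneg.2 key.le)]
    have hrw : N1 * (1 / (1 + x)) - N1 * (1 / (1 / a1 + x)) +
        (0 + (N2 * (1 / (1 / a2 + x)) - N2 * (1 / (1 + x)))) =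
        (N2 * (a2 - 1) * (1 + a1 * x) - N1 * (a1 - 1) * (1 + a2 * x)) /
          (a1 * a2 * ((1 + x) * ((1 / a1 + x) * (1 / a2 + x)))) := by
      field_simp
      ring
    rw [hrw]
    exact div_pos hnum (by positivity)
  -- strict monotonicity of G, hence of g
  have hGmono : StrictMonoOn G (Set.Ici (0:ℝ)) := by
    apply strictMonoOn_of_deriv_pos (convex_Ici 0)
    · exact fun x hx => ((hderiv x hx).continuousAt).continuousWithinAt
    · intro x hx
      rw [interior_Ici] at hx
      rw [(hderiv x (le_of_lt hx)).deriv]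
      exact hpos x (le_of_lt hx)
  have hmono : StrictMonoOn g (Set.Ici (0:ℝ)) := by
    intro x hx y hy hxy
    rw [hgeq x hx, hgeq y hy]
    exact hGmono hx hy hxy
  -- limit at infinity
  have lim_aux : ∀ c : ℝ, 0 < c →
      Filter.Tendsto (fun τ : ℝ => (1 + τ) / (c + τ)) Filter.atTop (nhds 1) := by
    intro c hc
    have h0 : Filter.Tendsto (fun τ : ℝ => 1 + (1 - c) / (c + τ)) Filter.atTop (nhds 1) := by
      have : Filter.Tendsto (fun τ : ℝ => (1 - c) / (c + τ)) Filter.atTop (nhds 0) :=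
        Filter.Tendsto.div_atTop tendsto_const_nhds
          (Filter.tendsto_atTop_add_const_left _ c Filter.tendsto_id)
      simpa using tendsto_const_nhds.add this
    refine h0.congr' ?_
    filter_upwards [Filter.eventually_gt_atTop 0] with τ hτ
    have : c + τ ≠ 0 := by positivity
    field_simp
    ring
  have lim1 : Filter.Tendsto (fun τ : ℝ => Real.log ((1 + τ) / (1 / a1 + τ)))
      Filter.atTop (nhds 0) := by
    have := (Real.continuousAt_log (x := (1:ℝ)) one_ne_zero).tendsto.comp (lim_aux (1/a1) hb1)
    simpa [Function.comp_def] using this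
  have lim2 : Filter.Tendsto (fun τ : ℝ => Real.log (a2 * (1 / a2 + τ) / (1 + τ)))
      Filter.atTop (nhds (Real.log a2)) := by
    have hfrac : Filter.Tendsto (fun τ : ℝ => a2 * (1 / a2 + τ) / (1 + τ))
        Filter.atTop (nhds a2) := by
      have h0 := (lim_aux (1:ℝ) one_pos)
      -- (1/a2 + τ)/(1 + τ) → 1 :  rewrite using lim_aux with roles swapped
      have h1' : Filter.Tendsto (fun τ : ℝ => (1 / a2 + τ) / (1 + τ))
          Filter.atTop (nhds 1) := by
        have h2' : Filter.Tendsto (fun τ : ℝ => 1 + (1 / a2 - 1) / (1 + τ))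
            Filter.atTop (nhds 1) := by
          have : Filter.Tendsto (fun τ : ℝ => (1 / a2 - 1) / (1 + τ)) Filter.atTop (nhds 0) :=
            Filter.Tendsto.div_atTop tendsto_const_nhds
              (Filter.tendsto_atTop_add_const_left _ 1 Filter.tendsto_id)
          simpa using tendsto_const_nhds.add this
        refine h2'.congr' ?_
        filter_upwards [Filter.eventually_gt_atTop 0] with τ hτ
        have : (1:ℝ) + τ ≠ 0 := by positivity
        field_simp
        ring
      have := h1'.const_mul a2
      simp only [mul_one] at this
      refine this.congr ?_
      intro τ
      ring
    have := (Real.continuousAt_log ha2'.ne').tendsto.comp hfrac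
    simpa [Function.comp_def] using this
  have htend : Filter.Tendsto g Filter.atTop (nhds (N2 * Real.log a2)) := by
    have : Filter.Tendsto (fun τ : ℝ => N1 * Real.log ((1 + τ) / (1 / a1 + τ)) +
        N2 * Real.log (a2 * (1 / a2 + τ) / (1 + τ))) Filter.atTop
        (nhds (N1 * 0 + N2 * Real.log a2)) :=
      (lim1.const_mul N1).add (lim2.const_mul N2)
    simp only [mul_zero, zero_add] at this
    exact this.congr fun τ => (hg τ).symm
  -- upper bounds
  have hle : ∀ τ : ℝ, 0 ≤ τ → g τ ≤ N2 * Real.log a2 := by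
    intro τ hτ
    refine ge_of_tendsto htend ?_
    filter_upwards [Filter.eventually_ge_atTop τ, Filter.eventually_ge_atTop (0:ℝ)]
      with s hs hs0
    exact hmono.monotoneOn hτ hs0 hs
  have hlt : ∀ τ : ℝ, 0 ≤ τ → g τ < N2 * Real.log a2 := by
    intro τ hτ
    have h1' : g τ < g (τ + 1) := hmono hτ (by linarith : (0:ℝ) ≤ τ + 1) (by linarith)
    exact lt_of_lt_of_le h1' (hle (τ + 1) (by linarith))
  refine ⟨hmono, hlt, htend, ?_, ?_⟩
  · rintro y ⟨τ, hτ, rfl⟩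
    exact hle τ hτ
  · intro b hb
    refine le_of_tendsto htend ?_
    filter_upwards [Filter.eventually_ge_atTop (0:ℝ)] with τ hτ
    exact hb ⟨τ, hτ, rfl⟩
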